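/- Let T be a rank-2 lattice with basis e₁, e₂ and set e₃ = −e₁−e₂. Consider the weights {e₁+e₂, e₁+e₃, e₂+e₃, −e₁−e₂, −e₁−e₃, −e₂−e₃}. The semigroup of nonnegative integer relations among these weights is not free: a minimal generating set must contain the three relations X_{eᵢ+eⱼ}X_{−eᵢ−eⱼ} (i<j) together with X_{e₁+e₂}X_{e₁+e₃}X_{e₂+e₃} and X_{−e₁−e₂}X_{−e₁−e₃}X_{−e₂−e₃}, giving at least 5 generators while the relation lattice has rank 4. -/
import Mathlib

def relSemigroup {M : Type*} [AddCommGroup M] {n : ℕ} (w : Fin n → M) :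
    AddSubmonoid (Fin n → ℕ) where
  carrier := {a | ∑ i, (a i : ℤ) • w i = 0}
  add_mem' := by
    intro a b ha hb
    simp only [Set.mem_setOf_eq] at *
    have : ∀ i ∈ Finset.univ, (((a + b) i : ℕ) : ℤ) • w i
        = (a i : ℤ) • w i + (b i : ℤ) • w i := by
      intro i _
      have : (((a + b) i : ℕ) : ℤ) = (a i : ℤ) + (b i : ℤ) := by simp [Pi.add_apply]
      rw [this, add_smul]
    rw [Finset.sum_congr rfl this, Finset.sum_add_distrib, ha, hb, add_zero]
  zero_mem' := by simp

def IsFreeRelMonoid {n : ℕ} (A : AddSubmonoid (Fin n → ℕ)) : Prop :=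
  ∃ r : ℕ, Nonempty (A ≃+ (Fin r → ℕ))

def IsIrreducibleIn {n : ℕ} (A : AddSubmonoid (Fin n → ℕ)) (a : Fin n → ℕ) : Prop :=
  a ∈ A ∧ a ≠ 0 ∧ ∀ b c : Fin n → ℕ, b ∈ A → c ∈ A → b + c = a → b = 0 ∨ c = 0

abbrev W6 : Fin 6 → (Fin 2 → ℤ) := ![![1, 1], ![0, -1], ![-1, 0], ![-1, -1], ![0, 1], ![1, 0]]

lemma memA (a : Fin 6 → ℕ) :
    a ∈ relSemigroup W6 ↔
    ((a 0 : ℤ) + a 5 = a 2 + a 3 ∧ (a 0 : ℤ) + a 4 = a 1 + a 3) := by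
  show (∑ i, ((a i : ℤ) • W6 i)) = 0 ↔ _
  rw [Fin.sum_univ_six,
    show W6 0 = ![1,1] from rfl, show W6 1 = ![0,-1] from rfl, show W6 2 = ![-1,0] from rfl,
    show W6 3 = ![-1,-1] from rfl, show W6 4 = ![0,1] from rfl, show W6 5 = ![1,0] from rfl,
    funext_iff, Fin.forall_fin_two]
  simp only [Pi.add_apply, Pi.smul_apply, smul_eq_mul, Matrix.cons_val_zero,
    Matrix.cons_val_one, Matrix.head_cons, Pi.zero_apply]
  constructor <;> intro h <;> constructor <;> omega

lemma irr_main (v : Fin 6 → ℕ) (n0 n1 n2 n3 n4 n5 : ℕ)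
    (hv0 : v 0 = n0) (hv1 : v 1 = n1) (hv2 : v 2 = n2) (hv3 : v 3 = n3)
    (hv4 : v 4 = n4) (hv5 : v 5 = n5)
    (hv : v ∈ relSemigroup W6) (hne : v ≠ 0)
    (key : ∀ b c : Fin 6 → ℕ,
      b 0 + c 0 = n0 → b 1 + c 1 = n1 → b 2 + c 2 = n2 → b 3 + c 3 = n3 →
      b 4 + c 4 = n4 → b 5 + c 5 = n5 →
      (b 0 : ℤ) + b 5 = b 2 + b 3 → (b 0 : ℤ) + b 4 = b 1 + b 3 →
      (c 0 : ℤ) + c 5 = c 2 + c 3 → (c 0 : ℤ) + c 4 = c 1 + c 3 →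
      (b 0 = 0 ∧ b 1 = 0 ∧ b 2 = 0 ∧ b 3 = 0 ∧ b 4 = 0 ∧ b 5 = 0) ∨
      (c 0 = 0 ∧ c 1 = 0 ∧ c 2 = 0 ∧ c 3 = 0 ∧ c 4 = 0 ∧ c 5 = 0)) :
    IsIrreducibleIn (relSemigroup W6) v := by
  refine ⟨hv, hne, fun b c hb hc hbc => ?_⟩
  obtain ⟨e1, e2⟩ := (memA b).mp hb
  obtain ⟨f1, f2⟩ := (memA c).mp hc
  have h : ∀ k, b k + c k = v k := fun k => congrFun hbc k
  rcases key b c (hv0 ▸ h 0) (hv1 ▸ h 1) (hv2 ▸ h 2) (hv3 ▸ h 3) (hv4 ▸ h 4) (hv5 ▸ h 5)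
      e1 e2 f1 f2 with
    ⟨h0, h1, h2, h3, h4, h5⟩ | ⟨h0, h1, h2, h3, h4, h5⟩
  · left; funext i; fin_cases i <;> assumption
  · right; funext i; fin_cases i <;> assumption

lemma sum_eq_one {r : ℕ} (a : Fin r → ℕ) (h0 : a ≠ 0)
    (h : ∀ p q : Fin r → ℕ, p + q = a → p = 0 ∨ q = 0) : ∑ i, a i = 1 := by
  obtain ⟨j, hj⟩ : ∃ j, a j ≠ 0 := by
    by_contra hc; push_neg at hc; exact h0 (funext fun i => hc i)
  have hdec : Pi.single j 1 + (a - Pi.single j 1) = a := by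
    funext i
    by_cases hij : i = j
    · subst hij
      simp only [Pi.add_apply, Pi.sub_apply, Pi.single_eq_same]
      omega
    · simp [Pi.single_eq_of_ne hij]
  rcases h _ _ hdec with hp | hq
  · exact absurd (congrFun hp j) (by simp)
  · have ha : a = Pi.single j 1 := by rw [← hdec, hq, add_zero]
    rw [ha]
    simp [Pi.single_apply]

/-- for the weights `e₁+e₂, e₁+e₃, e₂+e₃` and their negatives, where
`e₃ = −e₁−e₂` in a rank-2 lattice, the relation semigroup is not free: a minimal
generating set must contain the three pairing relations together with the two triple
relations, giving at least 5 generators while the relation lattice has rank 4. -/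
theorem stmt15 :
    let w : Fin 6 → (Fin 2 → ℤ) :=
      ![![1, 1], ![0, -1], ![-1, 0], ![-1, -1], ![0, 1], ![1, 0]]
      -- e₁+e₂, e₁+e₃, e₂+e₃, −(e₁+e₂), −(e₁+e₃), −(e₂+e₃), with e₃ = −e₁−e₂
    let A := relSemigroup w
    let u : Fin 6 → (Fin 6 → ℕ) := fun i => Pi.single i 1
    let t₁ := u 0 + u 3        -- X_{e₁+e₂} X_{−e₁−e₂}
    let t₂ := u 1 + u 4        -- X_{e₁+e₃} X_{−e₁−e₃}
    let t₃ := u 2 + u 5        -- X_{e₂+e₃} X_{−e₂−e₃}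
    let t₄ := u 0 + u 1 + u 2  -- X_{e₁+e₂} X_{e₁+e₃} X_{e₂+e₃}
    let t₅ := u 3 + u 4 + u 5  -- X_{−e₁−e₂} X_{−e₁−e₃} X_{−e₂−e₃}
    (∀ t ∈ ({t₁, t₂, t₃, t₄, t₅} : Set (Fin 6 → ℕ)), IsIrreducibleIn A t) ∧
    4 < ({t₁, t₂, t₃, t₄, t₅} : Finset (Fin 6 → ℕ)).card ∧
    ¬ IsFreeRelMonoid A := by
  intro w A u t₁ t₂ t₃ t₄ t₅
  have ht1 : t₁ = ![1,0,0,1,0,0] := by funext i; fin_cases i <;> rfl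
  have ht2 : t₂ = ![0,1,0,0,1,0] := by funext i; fin_cases i <;> rfl
  have ht3 : t₃ = ![0,0,1,0,0,1] := by funext i; fin_cases i <;> rfl
  have ht4 : t₄ = ![1,1,1,0,0,0] := by funext i; fin_cases i <;> rfl
  have ht5 : t₅ = ![0,0,0,1,1,1] := by funext i; fin_cases i <;> rfl
  have irr1 : IsIrreducibleIn (relSemigroup W6) ![1,0,0,1,0,0] :=
    irr_main _ 1 0 0 1 0 0 rfl rfl rfl rfl rfl rfl ((memA _).mpr (by decide)) (by decide)
      (by intro b c h0 h1 h2 h3 h4 h5 e1 e2 f1 f2; omega)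
  have irr2 : IsIrreducibleIn (relSemigroup W6) ![0,1,0,0,1,0] :=
    irr_main _ 0 1 0 0 1 0 rfl rfl rfl rfl rfl rfl ((memA _).mpr (by decide)) (by decide)
      (by intro b c h0 h1 h2 h3 h4 h5 e1 e2 f1 f2; omega)
  have irr3 : IsIrreducibleIn (relSemigroup W6) ![0,0,1,0,0,1] :=
    irr_main _ 0 0 1 0 0 1 rfl rfl rfl rfl rfl rfl ((memA _).mpr (by decide)) (by decide)
      (by intro b c h0 h1 h2 h3 h4 h5 e1 e2 f1 f2; omega)
  have irr4 : IsIrreducibleIn (relSemigroup W6) ![1,1,1,0,0,0] :=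
    irr_main _ 1 1 1 0 0 0 rfl rfl rfl rfl rfl rfl ((memA _).mpr (by decide)) (by decide)
      (by intro b c h0 h1 h2 h3 h4 h5 e1 e2 f1 f2; omega)
  have irr5 : IsIrreducibleIn (relSemigroup W6) ![0,0,0,1,1,1] :=
    irr_main _ 0 0 0 1 1 1 rfl rfl rfl rfl rfl rfl ((memA _).mpr (by decide)) (by decide)
      (by intro b c h0 h1 h2 h3 h4 h5 e1 e2 f1 f2; omega)
  refine ⟨?_, ?_, ?_⟩
  · intro t ht
    simp only [ht1, ht2, ht3, ht4, ht5, Set.mem_insert_iff, Set.mem_singleton_iff] at ht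
    rcases ht with rfl | rfl | rfl | rfl | rfl
    exacts [irr1, irr2, irr3, irr4, irr5]
  · rw [ht1, ht2, ht3, ht4, ht5]
    decide
  · rintro ⟨r, ⟨φ⟩⟩
    -- the five elements of A
    set v₁ : Fin 6 → ℕ := ![1,0,0,1,0,0]
    set v₂ : Fin 6 → ℕ := ![0,1,0,0,1,0]
    set v₃ : Fin 6 → ℕ := ![0,0,1,0,0,1]
    set v₄ : Fin 6 → ℕ := ![1,1,1,0,0,0]
    set v₅ : Fin 6 → ℕ := ![0,0,0,1,1,1]
    have atom : ∀ v : Fin 6 → ℕ, IsIrreducibleIn (relSemigroup W6) v →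
        ∀ hv : v ∈ relSemigroup W6, ∑ j, φ ⟨v, hv⟩ j = 1 := by
      intro v hirr hv
      apply sum_eq_one
      · intro h0
        have hz : φ 0 = 0 := φ.map_zero
        have hv0 : (⟨v, hv⟩ : relSemigroup W6) = 0 := φ.injective (h0.trans hz.symm)
        exact hirr.2.1 (congrArg Subtype.val hv0)
      · intro p q hpq
        have hx : φ.symm p + φ.symm q = ⟨v, hv⟩ := by
          rw [← AddEquiv.map_add φ.symm, hpq, AddEquiv.symm_apply_apply]
        have hvals : (φ.symm p : Fin 6 → ℕ) + (φ.symm q : Fin 6 → ℕ) = v :=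
          congrArg Subtype.val hx
        rcases hirr.2.2 _ _ (φ.symm p).2 (φ.symm q).2 hvals with h | h
        · left
          have : φ.symm p = 0 := Subtype.ext h
          rw [← φ.apply_symm_apply p, this, φ.map_zero]
        · right
          have : φ.symm q = 0 := Subtype.ext h
          rw [← φ.apply_symm_apply q, this, φ.map_zero]
    have m1 : v₁ ∈ relSemigroup W6 := irr1.1
    have m2 : v₂ ∈ relSemigroup W6 := irr2.1
    have m3 : v₃ ∈ relSemigroup W6 := irr3.1
    have m4 : v₄ ∈ relSemigroup W6 := irr4.1
    have m5 : v₅ ∈ relSemigroup W6 := irr5.1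
    have hequ : (⟨v₁, m1⟩ : relSemigroup W6) + ⟨v₂, m2⟩ + ⟨v₃, m3⟩ = ⟨v₄, m4⟩ + ⟨v₅, m5⟩ := by
      apply Subtype.ext
      show v₁ + v₂ + v₃ = v₄ + v₅
      decide
    have hφ : φ ⟨v₁, m1⟩ + φ ⟨v₂, m2⟩ + φ ⟨v₃, m3⟩ = φ ⟨v₄, m4⟩ + φ ⟨v₅, m5⟩ := by
      rw [← AddEquiv.map_add φ, ← AddEquiv.map_add φ, hequ, AddEquiv.map_add φ]
    have hs : ∑ j, (φ ⟨v₁, m1⟩ + φ ⟨v₂, m2⟩ + φ ⟨v₃, m3⟩) j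
        = ∑ j, (φ ⟨v₄, m4⟩ + φ ⟨v₅, m5⟩) j := by rw [hφ]
    simp only [Pi.add_apply, Finset.sum_add_distrib,
      atom v₁ irr1 m1, atom v₂ irr2 m2, atom v₃ irr3 m3,
      atom v₄ irr4 m4, atom v₅ irr5 m5] at hs
    omega
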